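/- arXiv:1512.02299 — 3 statements merged into one kernel-verified Lean document; each statement's English description precedes it below -/
import Mathlib

section
/- Let G be a group, E a perfect subgroup of G whose centralizer in G equals the center Z(G), and H a subgroup of G normalized by E. If ⁅H, E⁆ ≤ Z(G), then H ≤ Z(G). -/
open scoped commutatorElement

/-- Commutator with central factors. -/
lemma comm_central {G : Type*} [Group G] (a b e1 e2 : G)
    (ha : ∀ g : G, g * a = a * g) (hb : ∀ g : G, g * b = b * g) :
    ⁅a * e1, b * e2⁆ = ⁅e1, e2⁆ := by
  have ka : ∀ y : G, a * y * a⁻¹ = y := fun y => by rw [← ha y]; group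
  have kb : ∀ y : G, b * y * b⁻¹ = y := fun y => by rw [← hb y]; group
  simp only [commutatorElement_def, mul_inv_rev]
  calc a * e1 * (b * e2) * (e1⁻¹ * a⁻¹) * (e2⁻¹ * b⁻¹)
      = a * (e1 * (b * e2) * e1⁻¹) * a⁻¹ * (e2⁻¹ * b⁻¹) := by group
    _ = e1 * (b * e2) * e1⁻¹ * (e2⁻¹ * b⁻¹) := by rw [ka]
    _ = e1 * (b * (e2 * e1⁻¹ * e2⁻¹) * b⁻¹) := by group
    _ = e1 * (e2 * e1⁻¹ * e2⁻¹) := by rw [kb]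
    _ = e1 * e2 * e1⁻¹ * e2⁻¹ := by group

/-- If E is a perfect subgroup of G whose centralizer equals the center of G,
H is normalized by E, and ⁅H, E⁆ ≤ Z(G), then H ≤ Z(G). -/
theorem stmt_2 {G : Type*} [Group G] (E H : Subgroup G)
    (hE : ⁅E, E⁆ = E)
    (hcent : Subgroup.centralizer (E : Set G) = Subgroup.center G)
    (hnorm : ∀ e ∈ E, ∀ h ∈ H, e⁻¹ * h * e ∈ H)
    (hc : ⁅H, E⁆ ≤ Subgroup.center G) :
    H ≤ Subgroup.center G := by
  intro h hh
  rw [← hcent, Subgroup.mem_centralizer_iff]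
  intro e he
  suffices hs : E ≤ Subgroup.centralizer {h} by
    exact (Subgroup.mem_centralizer_iff.mp (hs he) h rfl).symm
  rw [← hE, Subgroup.commutator_le]
  intro e1 he1 e2 he2
  rw [Subgroup.mem_centralizer_iff]
  rintro x rfl
  -- goal : x * ⁅e1, e2⁆ = ⁅e1, e2⁆ * x, with hh : x ∈ H
  have ha : ∀ g : G, g * ⁅x, e1⁆ = ⁅x, e1⁆ * g :=
    Subgroup.mem_center_iff.mp (hc (Subgroup.commutator_mem_commutator hh he1))
  have hb : ∀ g : G, g * ⁅x, e2⁆ = ⁅x, e2⁆ * g :=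
    Subgroup.mem_center_iff.mp (hc (Subgroup.commutator_mem_commutator hh he2))
  have conj : x * ⁅e1, e2⁆ * x⁻¹ = ⁅x * e1 * x⁻¹, x * e2 * x⁻¹⁆ :=
    conjugate_commutatorElement e1 e2 x
  have c1 : x * e1 * x⁻¹ = ⁅x, e1⁆ * e1 := by group
  have c2 : x * e2 * x⁻¹ = ⁅x, e2⁆ * e2 := by group
  have key : x * ⁅e1, e2⁆ * x⁻¹ = ⁅e1, e2⁆ := by
    rw [conj, c1, c2, comm_central _ _ _ _ ha hb]
  calc x * ⁅e1, e2⁆ = x * ⁅e1, e2⁆ * x⁻¹ * x := by group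
    _ = ⁅e1, e2⁆ * x := by rw [key]
end

section
/- Let F be a field and n ≥ 1. Every matrix M ∈ GL_n(F) can be written as M = B₁ · P · B₂ where B₁ and B₂ are invertible upper triangular matrices and P is a permutation matrix (Bruhat decomposition). -/
open Matrix Finset

section Embed

variable {F : Type*} [Field F] {n : ℕ}

/-- order equiv splitting `Fin (n+1)` at `p`. -/
def brEmb (p : Fin (n + 1)) : Fin (n + 1) ≃ Fin n ⊕ PUnit :=
  (finSuccEquiv' p).trans (Equiv.optionEquivSumPUnit _)

@[simp] lemma brEmb_self (p : Fin (n + 1)) : brEmb p p = Sum.inr PUnit.unit := by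
  simp [brEmb, finSuccEquiv'_at]

@[simp] lemma brEmb_succAbove (p : Fin (n + 1)) (i : Fin n) :
    brEmb p (p.succAbove i) = Sum.inl i := by
  simp [brEmb, finSuccEquiv'_succAbove]

/-- Embed an `n×n` matrix into `(n+1)×(n+1)` with extra diagonal entry `d` at `(p,p)`. -/
noncomputable def brEmbed (p : Fin (n + 1)) (B : Matrix (Fin n) (Fin n) F) (d : F) :
    Matrix (Fin (n + 1)) (Fin (n + 1)) F :=
  (fromBlocks B 0 0 (Matrix.of fun _ _ : PUnit.{1} => d)).submatrix (brEmb p) (brEmb p)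

@[simp] lemma brEmbed_self_self (p : Fin (n + 1)) (B : Matrix (Fin n) (Fin n) F) (d : F) :
    brEmbed p B d p p = d := by simp [brEmbed]

@[simp] lemma brEmbed_self_succAbove (p : Fin (n + 1)) (B : Matrix (Fin n) (Fin n) F) (d : F)
    (j : Fin n) : brEmbed p B d p (p.succAbove j) = 0 := by simp [brEmbed]

@[simp] lemma brEmbed_succAbove_self (p : Fin (n + 1)) (B : Matrix (Fin n) (Fin n) F) (d : F)
    (i : Fin n) : brEmbed p B d (p.succAbove i) p = 0 := by simp [brEmbed]

@[simp] lemma brEmbed_succAbove_succAbove (p : Fin (n + 1)) (B : Matrix (Fin n) (Fin n) F) (d : F)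
    (i j : Fin n) : brEmbed p B d (p.succAbove i) (p.succAbove j) = B i j := by simp [brEmbed]

lemma brEmbed_det (p : Fin (n + 1)) (B : Matrix (Fin n) (Fin n) F) (d : F) :
    (brEmbed p B d).det = B.det * d := by
  rw [brEmbed, det_submatrix_equiv_self, det_fromBlocks_zero₂₁]
  simp [Matrix.det_unique]

lemma brEmbed_blockTriangular {p : Fin (n + 1)} {B : Matrix (Fin n) (Fin n) F} {d : F}
    (hB : B.BlockTriangular id) : (brEmbed p B d).BlockTriangular id := by
  intro i j hij
  rcases eq_or_ne i p with rfl | hi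
  · obtain ⟨z, rfl⟩ := Fin.exists_succAbove_eq (show j ≠ i from hij.ne)
    simp
  · obtain ⟨a, rfl⟩ := Fin.exists_succAbove_eq hi
    rcases eq_or_ne j p with rfl | hj
    · simp
    · obtain ⟨b, rfl⟩ := Fin.exists_succAbove_eq hj
      have : b < a := (Fin.succAbove_lt_succAbove_iff).mp hij
      simpa using hB this

end Embed

section Main

variable {F : Type*} [Field F]

theorem bruhat_aux : ∀ (n : ℕ) (M : Matrix (Fin n) (Fin n) F), IsUnit M.det →
    ∃ (B₁ B₂ : Matrix (Fin n) (Fin n) F) (σ : Equiv.Perm (Fin n)),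
      B₁.BlockTriangular id ∧ IsUnit B₁.det ∧ B₂.BlockTriangular id ∧ IsUnit B₂.det ∧
      M = B₁ * σ.permMatrix F * B₂ := by
  intro n
  induction n with
  | zero =>
      intro M _
      refine ⟨1, 1, 1, by intro i j _; exact i.elim0, (by simp : IsUnit (1 : Matrix (Fin 0) (Fin 0) F).det), by intro i j _; exact i.elim0, (by simp : IsUnit (1 : Matrix (Fin 0) (Fin 0) F).det), ?_⟩
      · ext i j; exact i.elim0
  | succ n ih =>
      intro M hMd
      classical
      -- the last row is nonzero
      have hrow : ∃ j, M (Fin.last n) j ≠ 0 := by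
        by_contra h
        push_neg at h
        exact hMd.ne_zero (det_eq_zero_of_row_eq_zero (Fin.last n) h)
      set S : Finset (Fin (n + 1)) := Finset.univ.filter (fun j => M (Fin.last n) j ≠ 0) with hS
      have hSne : S.Nonempty := by
        obtain ⟨j, hj⟩ := hrow; exact ⟨j, by simp [hS, hj]⟩
      set c : Fin (n + 1) := S.min' hSne with hc
      have hd : M (Fin.last n) c ≠ 0 := by
        have := S.min'_mem hSne; simpa [hS] using this
      set d : F := M (Fin.last n) c with hdd
      have hmin : ∀ k, k < c → M (Fin.last n) k = 0 := by
        intro k hk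
        by_contra hk0
        exact absurd (S.min'_le k (by simp [hS, hk0])) (not_le.mpr hk)
      -- column operations clearing the last row to the right of c
      set V : Matrix (Fin (n + 1)) (Fin (n + 1)) F :=
        Matrix.of (fun j k => if j = c ∧ c < k then -(M (Fin.last n) k / d) else 0) with hV
      set U : Matrix (Fin (n + 1)) (Fin (n + 1)) F := 1 + V with hU
      set N : Matrix (Fin (n + 1)) (Fin (n + 1)) F := M * U with hN
      have hMV : ∀ i k, (M * V) i k = M i c * V c k := by
        intro i k
        rw [Matrix.mul_apply]
        refine Finset.sum_eq_single c (fun b _ hb => ?_) (by simp)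
        have hz : V b k = 0 := by simp only [hV, Matrix.of_apply]; rw [if_neg]; tauto
        rw [hz, mul_zero]
      have hNrow : ∀ k, N (Fin.last n) k = if k = c then d else 0 := by
        intro k
        rw [hN, hU, Matrix.mul_add, Matrix.mul_one, Matrix.add_apply, hMV]
        rcases lt_trichotomy k c with h | rfl | h
        · have h1 : V c k = 0 := by
            simp only [hV, Matrix.of_apply]; rw [if_neg]; rintro ⟨-, h2⟩; exact absurd (h2.trans h) (lt_irrefl c)
          rw [h1, mul_zero, hmin k h, if_neg h.ne, add_zero]
        · have h1 : V c c = 0 := by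
            simp only [hV, Matrix.of_apply]; rw [if_neg]; rintro ⟨-, h2⟩; exact absurd h2 (lt_irrefl _)
          rw [h1, mul_zero, if_pos rfl, add_zero]
        · have h1 : V c k = -(M (Fin.last n) k / d) := by simp [hV, h]
          rw [h1, if_neg h.ne', mul_neg, mul_div_cancel₀ _ hd, add_neg_cancel]
      have hNc : N (Fin.last n) c = d := by rw [hNrow, if_pos rfl]
      -- row operations clearing column c above the last row
      set W : Matrix (Fin (n + 1)) (Fin (n + 1)) F :=
        Matrix.of (fun i j => if j = Fin.last n ∧ i ≠ Fin.last n then -(N i c / d) else 0) with hW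
      set L : Matrix (Fin (n + 1)) (Fin (n + 1)) F := 1 + W with hL
      set M' : Matrix (Fin (n + 1)) (Fin (n + 1)) F := L * N with hM'
      have hWN : ∀ i k, (W * N) i k = W i (Fin.last n) * N (Fin.last n) k := by
        intro i k
        rw [Matrix.mul_apply]
        refine Finset.sum_eq_single (Fin.last n) (fun b _ hb => ?_) (by simp)
        have hz : W i b = 0 := by simp only [hW, Matrix.of_apply]; rw [if_neg]; tauto
        rw [hz, zero_mul]
      have hM'row : ∀ k, M' (Fin.last n) k = if k = c then d else 0 := by
        intro k
        rw [hM', hL, Matrix.add_mul, Matrix.one_mul, Matrix.add_apply, hWN]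
        have hz : W (Fin.last n) (Fin.last n) = 0 := by
          simp only [hW, Matrix.of_apply]; rw [if_neg]; tauto
        rw [hz, zero_mul, add_zero, hNrow]
      have hM'col : ∀ i, i ≠ Fin.last n → M' i c = 0 := by
        intro i hi
        rw [hM', hL, Matrix.add_mul, Matrix.one_mul, Matrix.add_apply, hWN, hNc]
        have hz : W i (Fin.last n) = -(N i c / d) := by
          simp [hW, hi]
        rw [hz, neg_mul, div_mul_cancel₀ _ hd, add_neg_cancel]
      have hM'A : ∀ i k, i ≠ Fin.last n → M' i k = N i k + W i (Fin.last n) * N (Fin.last n) k := by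
        intro i k _
        rw [hM', hL, Matrix.add_mul, Matrix.one_mul, Matrix.add_apply, hWN]
      -- triangularity and determinants of U and L
      have hVtri : V.BlockTriangular id := by
        intro i j hij
        simp only [hV, Matrix.of_apply]; rw [if_neg]
        rintro ⟨rfl, h2⟩; exact absurd (h2.trans hij) (lt_irrefl _)
      have hWtri : W.BlockTriangular id := by
        intro i j hij
        simp only [hW, Matrix.of_apply]; rw [if_neg]
        rintro ⟨rfl, -⟩; exact absurd hij (by simp [Fin.le_last i, not_lt])
      have hUtri : U.BlockTriangular id := by rw [hU]; exact Matrix.blockTriangular_one.add hVtri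
      have hLtri : L.BlockTriangular id := by rw [hL]; exact Matrix.blockTriangular_one.add hWtri
      have hUdet : U.det = 1 := by
        rw [det_of_upperTriangular hUtri]
        have : ∀ i, U i i = 1 := by
          intro i
          rw [hU, Matrix.add_apply, Matrix.one_apply_eq]
          have hz : V i i = 0 := by
            simp only [hV, Matrix.of_apply]; rw [if_neg]; rintro ⟨rfl, h2⟩; exact absurd h2 (lt_irrefl _)
          rw [hz, add_zero]
        simp [this]
      have hLdet : L.det = 1 := by
        rw [det_of_upperTriangular hLtri]
        have : ∀ i, L i i = 1 := by
          intro i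
          rw [hL, Matrix.add_apply, Matrix.one_apply_eq]
          have hz : W i i = 0 := by
            simp only [hW, Matrix.of_apply]; rw [if_neg]; tauto
          rw [hz, add_zero]
        simp [this]
      have hM'det : IsUnit M'.det := by
        rw [hM', hN, det_mul, det_mul, hLdet, hUdet, one_mul, mul_one]
        exact hMd
      -- the minor
      set A : Matrix (Fin n) (Fin n) F := M'.submatrix (Fin.last n).succAbove c.succAbove with hA
      have hexp := Matrix.det_succ_row M' (Fin.last n)
      rw [Finset.sum_eq_single c (fun b _ hb => by rw [hM'row b, if_neg hb, mul_zero, zero_mul])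
        (by simp)] at hexp
      rw [hM'row c, if_pos rfl, ← hA] at hexp
      have hAdet : IsUnit A.det := by
        rw [isUnit_iff_ne_zero] at hM'det ⊢
        intro h0
        exact hM'det (by rw [hexp, h0, mul_zero])
      obtain ⟨Ba, Bb, σ', hBa_tri, hBa_det, hBb_tri, hBb_det, hAeq⟩ := ih A hAdet
      -- the permutation
      set τ : Equiv.Perm (Fin (n + 1)) :=
        (finSuccEquiv' (Fin.last n)).trans ((Equiv.optionCongr σ').trans (finSuccEquiv' c).symm)
        with hτ
      have hτ_last : τ (Fin.last n) = c := by
        simp [hτ, finSuccEquiv'_at, finSuccEquiv'_symm_none]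
      have hτ_cast : ∀ i, τ ((Fin.last n).succAbove i) = c.succAbove (σ' i) := by
        intro i
        have h1 : (finSuccEquiv' (Fin.last n)) ((Fin.last n).succAbove i) = some i :=
          finSuccEquiv'_succAbove _ _
        simp only [hτ, Equiv.trans_apply, h1, Equiv.optionCongr_apply, Option.map_some,
          finSuccEquiv'_symm_some]
      set P₁ := brEmbed (Fin.last n) Ba 1 with hP₁
      set P₂ := brEmbed c Bb d with hP₂
      have hAeq' : ∀ i j, A i j = ∑ m, Ba i m * Bb (σ' m) j := by
        intro i j
        rw [hAeq, Matrix.mul_assoc, PEquiv.toMatrix_toPEquiv_mul, Matrix.mul_apply]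
        simp [Matrix.submatrix_apply]
      have hkey : M' = P₁ * τ.permMatrix F * P₂ := by
        rw [Matrix.mul_assoc, PEquiv.toMatrix_toPEquiv_mul]
        ext i k
        rw [Matrix.mul_apply]
        simp only [Matrix.submatrix_apply, id]
        rw [Fin.sum_univ_succAbove (fun m => P₁ i m * P₂ (τ m) k) (Fin.last n)]
        rcases eq_or_ne i (Fin.last n) with rfl | hi
        · have h1 : ∀ m', P₁ (Fin.last n) ((Fin.last n).succAbove m') = 0 := fun m' => by
            rw [hP₁]; exact brEmbed_self_succAbove _ _ _ _
          have h2 : P₁ (Fin.last n) (Fin.last n) = 1 := by rw [hP₁]; exact brEmbed_self_self _ _ _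
          simp only [h1, zero_mul, Finset.sum_const_zero, add_zero, h2, one_mul, hτ_last]
          rcases eq_or_ne k c with rfl | hk
          · rw [hM'row, if_pos rfl, hP₂, brEmbed_self_self]
          · obtain ⟨z, rfl⟩ := Fin.exists_succAbove_eq hk
            rw [hM'row, if_neg hk, hP₂, brEmbed_self_succAbove]
        · obtain ⟨i₀, rfl⟩ := Fin.exists_succAbove_eq hi
          have h1 : P₁ ((Fin.last n).succAbove i₀) (Fin.last n) = 0 := by
            rw [hP₁]; exact brEmbed_succAbove_self _ _ _ _
          have h2 : ∀ m', P₁ ((Fin.last n).succAbove i₀) ((Fin.last n).succAbove m') = Ba i₀ m' :=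
            fun m' => by rw [hP₁]; exact brEmbed_succAbove_succAbove _ _ _ _ _
          simp only [h1, zero_mul, zero_add, h2, hτ_cast]
          rcases eq_or_ne k c with rfl | hk
          · have h3 : ∀ m', P₂ (c.succAbove (σ' m')) c = 0 := fun m' => by
              rw [hP₂]; exact brEmbed_succAbove_self _ _ _ _
            simp only [h3, mul_zero, Finset.sum_const_zero]
            exact hM'col _ (Fin.succAbove_ne _ _)
          · obtain ⟨z, rfl⟩ := Fin.exists_succAbove_eq hk
            have h3 : ∀ m', P₂ (c.succAbove (σ' m')) (c.succAbove z) = Bb (σ' m') z := fun m' => by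
              rw [hP₂]; exact brEmbed_succAbove_succAbove _ _ _ _ _
            simp only [h3]
            have : M' ((Fin.last n).succAbove i₀) (c.succAbove z) = A i₀ z := by
              rw [hA, Matrix.submatrix_apply]
            rw [this, hAeq' i₀ z]
      -- assemble
      have hUdet_u : IsUnit U.det := by rw [hUdet]; exact isUnit_one
      have hLdet_u : IsUnit L.det := by rw [hLdet]; exact isUnit_one
      have h1 : M' * U⁻¹ = L * M := by
        rw [hM', hN, Matrix.mul_assoc L, Matrix.mul_assoc M, Matrix.mul_nonsing_inv U hUdet_u,
          Matrix.mul_one]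
      have h2 : L⁻¹ * (M' * U⁻¹) = M := by
        rw [h1, ← Matrix.mul_assoc, Matrix.nonsing_inv_mul L hLdet_u, Matrix.one_mul]
      haveI : Invertible L := L.invertibleOfIsUnitDet hLdet_u
      haveI : Invertible U := U.invertibleOfIsUnitDet hUdet_u
      refine ⟨L⁻¹ * P₁, P₂ * U⁻¹, τ, ?_, ?_, ?_, ?_, ?_⟩
      · exact (Matrix.blockTriangular_inv_of_blockTriangular hLtri).mul
          (brEmbed_blockTriangular hBa_tri)
      · rw [det_mul, hP₁, brEmbed_det, mul_one]
        exact (L.isUnit_nonsing_inv_det hLdet_u).mul hBa_det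
      · exact (brEmbed_blockTriangular hBb_tri).mul
          (Matrix.blockTriangular_inv_of_blockTriangular hUtri)
      · rw [det_mul, hP₂, brEmbed_det]
        exact (hBb_det.mul (isUnit_iff_ne_zero.mpr hd)).mul (U.isUnit_nonsing_inv_det hUdet_u)
      · rw [← h2, hkey]
        simp only [Matrix.mul_assoc]

end Main

/-- Bruhat decomposition: every M ∈ GL_n(F) is B₁ · P · B₂ with B₁, B₂
invertible upper triangular and P a permutation matrix. -/
theorem stmt_11 {F : Type*} [Field F] {n : ℕ} (hn : 1 ≤ n)
    (M : GL (Fin n) F) :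
    ∃ (B₁ B₂ : Matrix (Fin n) (Fin n) F) (σ : Equiv.Perm (Fin n)),
      (∀ i j : Fin n, j < i → B₁ i j = 0) ∧ IsUnit B₁.det ∧
      (∀ i j : Fin n, j < i → B₂ i j = 0) ∧ IsUnit B₂.det ∧
      (M : Matrix (Fin n) (Fin n) F) = B₁ * σ.permMatrix F * B₂ := by
  obtain ⟨B₁, B₂, σ, h1, h2, h3, h4, h5⟩ :=
    bruhat_aux n (M : Matrix (Fin n) (Fin n) F)
      ((Matrix.isUnit_iff_isUnit_det _).mp M.isUnit)
  exact ⟨B₁, B₂, σ, fun i j h => h1 h, h2, fun i j h => h3 h, h4, h5⟩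
end

section
/- Let R be a commutative ring, n ≥ 3, and H a subgroup of GL_n(R) normalized by the elementary subgroup E_n(R). For distinct indices i, j define q_{ij}(H) = { t ∈ R : e_{ij}(t) ∈ H }. Then q_{ij}(H) does not depend on the pair (i,j): q_{ij}(H) = q_{kl}(H) for all pairs of distinct indices, and q_{ij}(H) is an ideal of R. -/
/-- The elementary subgroup E_n(R) of GL_n(R). -/
def elemSubgroup (R : Type*) [CommRing R] (n : ℕ) : Subgroup (GL (Fin n) R) :=
  Subgroup.closure {g : GL (Fin n) R | ∃ i j : Fin n, ∃ r : R, i ≠ j ∧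
    (g : Matrix (Fin n) (Fin n) R) = 1 + r • Matrix.single i j 1}

section aux

variable {R : Type*} [CommRing R] {n : ℕ}

/-- Elementary matrix. -/
def Emat (i j : Fin n) (t : R) : Matrix (Fin n) (Fin n) R :=
  1 + t • Matrix.single i j 1

lemma Emat_mul (i j k l : Fin n) (t s : R) :
    Emat i j t * Emat k l s = 1 + t • Matrix.single i j 1
      + s • Matrix.single k l 1
      + (t * s) • (Matrix.single i j 1 * Matrix.single k l (1:R)) := by
  simp only [Emat, mul_add, add_mul, one_mul, mul_one, Matrix.smul_mul, Matrix.mul_smul,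
    smul_smul]
  module

lemma Emat_mul_same {i j : Fin n} (hij : i ≠ j) (t s : R) :
    Emat i j t * Emat i j s = Emat i j (t + s) := by
  rw [Emat_mul, Matrix.single_mul_single_of_ne _ _ _ _ (Ne.symm hij) _, smul_zero]
  simp only [Emat, add_smul]
  abel

lemma Emat_comm3 {i j l : Fin n} (hij : i ≠ j) (hjl : j ≠ l) (hil : i ≠ l) (t s : R) :
    Emat i j (-t) * Emat j l (-s) * Emat i j t * Emat j l s = Emat i l (t * s) := by
  have h1 : Matrix.single i j (1:R) * Matrix.single i j 1 = 0 :=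
    Matrix.single_mul_single_of_ne _ _ _ _ (Ne.symm hij) _
  have h2 : Matrix.single j l (1:R) * Matrix.single j l 1 = 0 :=
    Matrix.single_mul_single_of_ne _ _ _ _ (Ne.symm hjl) _
  have h3 : Matrix.single i j (1:R) * Matrix.single j l 1 =
      Matrix.single i l 1 := by
    rw [Matrix.single_mul_single_same, one_mul]
  have h4 : Matrix.single j l (1:R) * Matrix.single i j 1 = 0 :=
    Matrix.single_mul_single_of_ne _ _ _ _ (Ne.symm hil) _
  have h5 : Matrix.single i l (1:R) * Matrix.single i j 1 = 0 :=
    Matrix.single_mul_single_of_ne _ _ _ _ (Ne.symm hil) _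
  have h6 : Matrix.single i l (1:R) * Matrix.single j l 1 = 0 :=
    Matrix.single_mul_single_of_ne _ _ _ _ (Ne.symm hjl) _
  have h7 : Matrix.single i j (1:R) * Matrix.single i l 1 = 0 :=
    Matrix.single_mul_single_of_ne _ _ _ _ (Ne.symm hij) _
  have h8 : Matrix.single j l (1:R) * Matrix.single i l 1 = 0 :=
    Matrix.single_mul_single_of_ne _ _ _ _ (Ne.symm hil) _
  have h9 : Matrix.single i l (1:R) * Matrix.single i l 1 = 0 :=
    Matrix.single_mul_single_of_ne _ _ _ _ (Ne.symm hil) _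
  simp only [Emat, mul_add, add_mul, one_mul, mul_one, Matrix.smul_mul, Matrix.mul_smul,
    smul_smul, h1, h2, h3, h4, h5, h6, h7, h8, h9, smul_zero, mul_zero, zero_mul,
    add_zero, zero_add]
  module

/-- Elementary matrix as an element of GL. -/
def elemGL (i j : Fin n) (hij : i ≠ j) (t : R) : GL (Fin n) R :=
  ⟨Emat i j t, Emat i j (-t),
    by rw [Emat_mul_same hij]; simp [Emat],
    by rw [Emat_mul_same hij]; simp [Emat]⟩

lemma elemGL_mem (i j : Fin n) (hij : i ≠ j) (t : R) :
    elemGL i j hij t ∈ elemSubgroup R n :=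
  Subgroup.subset_closure ⟨i, j, t, hij, rfl⟩

lemma elemGL_coe (i j : Fin n) (hij : i ≠ j) (t : R) :
    (elemGL i j hij t : Matrix (Fin n) (Fin n) R) = Emat i j t := rfl

lemma elemGL_inv_coe (i j : Fin n) (hij : i ≠ j) (t : R) :
    ((elemGL i j hij t)⁻¹ : GL (Fin n) R).val = Emat i j (-t) := rfl

variable (H : Subgroup (GL (Fin n) R))

/-- The level set. -/
def Qset (i j : Fin n) : Set R :=
  {t : R | ∃ h ∈ H, (h : Matrix (Fin n) (Fin n) R) = Emat i j t}

variable {H}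
variable (hnorm : ∀ e ∈ elemSubgroup R n, ∀ h ∈ H, e⁻¹ * h * e ∈ H)

include hnorm

lemma step1 {i j l : Fin n} (hij : i ≠ j) (hjl : j ≠ l) (hil : i ≠ l) {t : R}
    (ht : t ∈ Qset H i j) : t ∈ Qset H i l := by
  obtain ⟨h, hH, hcoe⟩ := ht
  have heq : h = elemGL i j hij t := Units.ext hcoe
  subst heq
  set a := elemGL j l hjl (1 : R) with ha
  refine ⟨(elemGL i j hij t)⁻¹ * (a⁻¹ * elemGL i j hij t * a),
    mul_mem (inv_mem hH) (hnorm a (elemGL_mem _ _ _ _) _ hH), ?_⟩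
  show ((elemGL i j hij t)⁻¹ * (a⁻¹ * elemGL i j hij t * a)).val = Emat i l t
  rw [Units.val_mul, Units.val_mul, Units.val_mul, elemGL_inv_coe, elemGL_inv_coe,
    elemGL_coe, elemGL_coe, ← mul_assoc, ← mul_assoc, Emat_comm3 hij hjl hil, mul_one]

lemma step2 {k i j : Fin n} (hki : k ≠ i) (hij : i ≠ j) (hkj : k ≠ j) {t : R}
    (ht : t ∈ Qset H i j) : t ∈ Qset H k j := by
  obtain ⟨h, hH, hcoe⟩ := ht
  have heq : h = elemGL i j hij t := Units.ext hcoe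
  subst heq
  set a := elemGL k i hki (1 : R) with ha
  refine ⟨a⁻¹ * (elemGL i j hij t)⁻¹ * a * elemGL i j hij t,
    mul_mem (hnorm a (elemGL_mem _ _ _ _) _ (inv_mem hH)) hH, ?_⟩
  show (a⁻¹ * (elemGL i j hij t)⁻¹ * a * elemGL i j hij t).val = Emat k j t
  rw [Units.val_mul, Units.val_mul, Units.val_mul, elemGL_inv_coe, elemGL_inv_coe, elemGL_coe, elemGL_coe,
    Emat_comm3 hki hij hkj, one_mul]

omit hnorm in
lemma exists_third (hn : 3 ≤ n) (i j : Fin n) : ∃ k : Fin n, k ≠ i ∧ k ≠ j := by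
  by_contra hc
  push_neg at hc
  have hsub : (Finset.univ : Finset (Fin n)) ⊆ {i, j} := by
    intro k _
    simp only [Finset.mem_insert, Finset.mem_singleton]
    by_contra hk
    push_neg at hk
    exact hk.2 (hc k hk.1)
  have := Finset.card_le_card hsub
  simp only [Finset.card_univ, Fintype.card_fin] at this
  have h2 : ({i, j} : Finset (Fin n)).card ≤ 2 :=
    le_trans (Finset.card_insert_le _ _) (by simp)
  omega

lemma subA {i j k l : Fin n} (hij : i ≠ j) (hkl : k ≠ l) (hli : l ≠ i) :
    Qset H i j ⊆ Qset H k l := by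
  have h1 : Qset H i j ⊆ Qset H i l := by
    by_cases hl : l = j
    · subst hl; exact subset_rfl
    · exact fun t ht => step1 hnorm hij (fun h => hl h.symm) hli.symm ht
  have h2 : Qset H i l ⊆ Qset H k l := by
    by_cases hk : k = i
    · subst hk; exact subset_rfl
    · exact fun t ht => step2 hnorm hk hli.symm hkl ht
  exact h1.trans h2

lemma subQ (hn : 3 ≤ n) {i j k l : Fin n} (hij : i ≠ j) (hkl : k ≠ l) :
    Qset H i j ⊆ Qset H k l := by
  by_cases hli : l = i
  · subst hli
    obtain ⟨m, hml, hmk⟩ := exists_third hn l k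
    have s1 : Qset H l j ⊆ Qset H m k := subA hnorm hij hmk hkl
    have s2 : Qset H m k ⊆ Qset H k l := subA hnorm hmk hkl (Ne.symm hml)
    exact s1.trans s2
  · exact subA hnorm hij hkl hli

lemma Qeq (hn : 3 ≤ n) {i j k l : Fin n} (hij : i ≠ j) (hkl : k ≠ l) :
    Qset H i j = Qset H k l :=
  subset_antisymm (subQ hnorm hn hij hkl) (subQ hnorm hn hkl hij)

omit hnorm in
lemma zeroQ (i j : Fin n) : (0 : R) ∈ Qset H i j :=
  ⟨1, one_mem H, by simp [Emat]⟩

omit hnorm in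
lemma addQ {i j : Fin n} (hij : i ≠ j) {t s : R} (ht : t ∈ Qset H i j)
    (hs : s ∈ Qset H i j) : t + s ∈ Qset H i j := by
  obtain ⟨h1, hH1, hc1⟩ := ht
  obtain ⟨h2, hH2, hc2⟩ := hs
  exact ⟨h1 * h2, mul_mem hH1 hH2, by
    rw [Units.val_mul, hc1, hc2, Emat_mul_same hij]⟩

lemma smulQ (hn : 3 ≤ n) {i j : Fin n} (hij : i ≠ j) (r : R) {t : R}
    (ht : t ∈ Qset H i j) : r * t ∈ Qset H i j := by
  obtain ⟨k, hki, hkj⟩ := exists_third hn i j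
  have ht' : t ∈ Qset H k j := subQ hnorm hn hij hkj ht
  obtain ⟨h, hH, hcoe⟩ := ht'
  have heq : h = elemGL k j hkj t := Units.ext hcoe
  subst heq
  set a := elemGL i k (Ne.symm hki) r with ha
  refine ⟨a⁻¹ * (elemGL k j hkj t)⁻¹ * a * elemGL k j hkj t,
    mul_mem (hnorm a (elemGL_mem _ _ _ _) _ (inv_mem hH)) hH, ?_⟩
  show (a⁻¹ * (elemGL k j hkj t)⁻¹ * a * elemGL k j hkj t).val = Emat i j (r * t)
  rw [Units.val_mul, Units.val_mul, Units.val_mul, elemGL_inv_coe, elemGL_inv_coe, elemGL_coe, elemGL_coe,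
    Emat_comm3 (Ne.symm hki) hkj hij]

end aux

/-- Level computation: for H ≤ GL_n(R) (n ≥ 3) normalized by E_n(R), the sets
q_{ij}(H) = { t : e_{ij}(t) ∈ H } coincide for all pairs of distinct indices
and form an ideal of R. -/
theorem stmt_16 {R : Type*} [CommRing R] {n : ℕ} (hn : 3 ≤ n)
    (H : Subgroup (GL (Fin n) R))
    (hnorm : ∀ e ∈ elemSubgroup R n, ∀ h ∈ H, e⁻¹ * h * e ∈ H) :
    let q : Fin n → Fin n → Set R := fun i j =>
      {t : R | ∃ h ∈ H, (h : Matrix (Fin n) (Fin n) R) =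
        1 + t • Matrix.single i j 1}
    (∀ i j k l : Fin n, i ≠ j → k ≠ l → q i j = q k l) ∧
    (∃ I : Ideal R, ∀ i j : Fin n, i ≠ j → q i j = (I : Set R)) := by
  intro q
  have hq : ∀ i j : Fin n, q i j = Qset H i j := fun i j => rfl
  constructor
  · intro i j k l hij hkl
    rw [hq, hq]
    exact Qeq hnorm hn hij hkl
  · have h0 : (0 : ℕ) < n := by omega
    have h1 : (1 : ℕ) < n := by omega
    set i0 : Fin n := ⟨0, h0⟩
    set j0 : Fin n := ⟨1, h1⟩
    have hij0 : i0 ≠ j0 := by simp [i0, j0, Fin.ext_iff]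
    refine ⟨{ carrier := Qset H i0 j0
              add_mem' := fun ha hb => addQ hij0 ha hb
              zero_mem' := zeroQ i0 j0
              smul_mem' := fun r t ht => smulQ hnorm hn hij0 r ht }, ?_⟩
    intro i j hij
    rw [hq]
    exact Qeq hnorm hn hij hij0
end
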